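/- arXiv:1705.11156 — 2 statements merged into one kernel-verified Lean document; each statement's English description precedes it below -/
import Mathlib

section
/- The polynomial g(x, y) = y(x⁵ − x y¹² + y¹⁵) (weighted homogeneous of type (16; 3, 1) with an isolated singularity at the origin) has Łojasiewicz exponent L(g) = 15. -/
open MvPolynomial

/-- Euclidean norm of the gradient of a polynomial `f` at `x`. -/
noncomputable def gradNorm {n : ℕ} (f : MvPolynomial (Fin n) ℝ) (x : Fin n → ℝ) : ℝ :=
  Real.sqrt (∑ i, (eval x (pderiv i f)) ^ 2)

/-- Euclidean norm on `Fin n → ℝ`. -/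
noncomputable def eNorm {n : ℕ} (x : Fin n → ℝ) : ℝ :=
  Real.sqrt (∑ i, (x i) ^ 2)

/-- `f` is weighted homogeneous of type `(d; w)`: every monomial `x^α` appearing in `f`
satisfies `∑ i, α i * w i = d`. -/
def IsWeightedHomog {n : ℕ} (f : MvPolynomial (Fin n) ℝ) (w : Fin n → ℕ) (d : ℕ) : Prop :=
  ∀ α ∈ f.support, ∑ i, α i * w i = d

/-- `f` is non-degenerate (isolated singularity at the origin): in some neighborhood of `0`
the gradient of `f` vanishes only at the origin. -/
def Nondeg {n : ℕ} (f : MvPolynomial (Fin n) ℝ) : Prop :=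
  ∃ U ∈ nhds (0 : Fin n → ℝ), ∀ x ∈ U, (∀ i, eval x (pderiv i f) = 0) → x = 0

/-- The Łojasiewicz inequality `‖∇f(x)‖ ≥ C ‖x‖^lam` holds near `0` for some `C > 0`. -/
def LojIneq {n : ℕ} (f : MvPolynomial (Fin n) ℝ) (lam : ℝ) : Prop :=
  ∃ C > (0 : ℝ), ∃ U ∈ nhds (0 : Fin n → ℝ), ∀ x ∈ U, C * eNorm x ^ lam ≤ gradNorm f x

/-- The Łojasiewicz exponent of `f`: the infimum of all `lam > 0` for which the
Łojasiewicz inequality holds near the origin. -/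
noncomputable def lojExp {n : ℕ} (f : MvPolynomial (Fin n) ℝ) : ℝ :=
  sInf {lam : ℝ | 0 < lam ∧ LojIneq f lam}

/-- The weighted "radius" `ρ(x) = (∑ i |x i| ^ (2 / w i)) ^ (1/2)`. -/
noncomputable def rho {n : ℕ} (w : Fin n → ℕ) (x : Fin n → ℝ) : ℝ :=
  Real.sqrt (∑ i, |x i| ^ ((2 : ℝ) / (w i : ℝ)))

/-- The weighted norm of the gradient:
`‖grad_w f(x)‖_w = (∑ i ρ(x)^(2 wᵢ) |∂f/∂xᵢ(x)|²)^(1/2)`. -/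
noncomputable def wGradNorm {n : ℕ} (w : Fin n → ℕ) (f : MvPolynomial (Fin n) ℝ)
    (x : Fin n → ℝ) : ℝ :=
  Real.sqrt (∑ i, rho w x ^ (2 * w i) * (eval x (pderiv i f)) ^ 2)

namespace Stmt16Aux

theorem pd0eval (x : Fin 2 → ℝ) :
    eval x (pderiv 0 (X 1 * ((X 0) ^ 5 - X 0 * (X 1) ^ 12 + (X 1) ^ 15) : MvPolynomial (Fin 2) ℝ))
      = x 1 * (5 * x 0 ^ 4 - x 1 ^ 12) := by
  simp [pderiv_mul, pderiv_pow, pderiv_X, Pi.single_apply]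

theorem pd1eval (x : Fin 2 → ℝ) :
    eval x (pderiv 1 (X 1 * ((X 0) ^ 5 - X 0 * (X 1) ^ 12 + (X 1) ^ 15) : MvPolynomial (Fin 2) ℝ))
      = x 0 ^ 5 - 13 * x 0 * x 1 ^ 12 + 16 * x 1 ^ 15 := by
  simp [pderiv_mul, pderiv_pow, pderiv_X, Pi.single_apply]
  ring

theorem gradEq (x : Fin 2 → ℝ) :
    gradNorm (X 1 * ((X 0) ^ 5 - X 0 * (X 1) ^ 12 + (X 1) ^ 15) : MvPolynomial (Fin 2) ℝ) x
      = Real.sqrt ((x 1 * (5 * x 0 ^ 4 - x 1 ^ 12)) ^ 2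
          + (x 0 ^ 5 - 13 * x 0 * x 1 ^ 12 + 16 * x 1 ^ 15) ^ 2) := by
  unfold gradNorm
  rw [Fin.sum_univ_two, pd0eval, pd1eval]

theorem eNormEq (x : Fin 2 → ℝ) : eNorm x = Real.sqrt (x 0 ^ 2 + x 1 ^ 2) := by
  unfold eNorm; rw [Fin.sum_univ_two]

theorem rpow15 (y : ℝ) : y ^ (15 : ℝ) = y ^ (15 : ℕ) := by
  rw [← Real.rpow_natCast y 15]; norm_num

theorem sphere_pos (a b : ℝ) (hab : a^2 + b^6 = 1) :
    0 < (b*(5*a^4 - b^12))^2 + (a^5 - 13*a*b^12 + 16*b^15)^2 := by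
  rcases eq_or_ne b 0 with hb | hb
  · subst hb
    have ha2 : a^2 = 1 := by nlinarith
    have h10 : (a^5)^2 = 1 := by linear_combination (a^8 + a^6 + a^4 + a^2 + 1) * ha2
    nlinarith [sq_nonneg (a^5)]
  · by_contra hcon
    push_neg at hcon
    have h1 : (b*(5*a^4 - b^12))^2 = 0 := by
      nlinarith [sq_nonneg (b*(5*a^4 - b^12)), sq_nonneg (a^5 - 13*a*b^12 + 16*b^15)]
    have h2 : (a^5 - 13*a*b^12 + 16*b^15)^2 = 0 := by
      nlinarith [sq_nonneg (b*(5*a^4 - b^12)), sq_nonneg (a^5 - 13*a*b^12 + 16*b^15)]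
    have hP : b*(5*a^4 - b^12) = 0 := pow_eq_zero_iff (by norm_num) |>.mp h1
    have hQ : a^5 - 13*a*b^12 + 16*b^15 = 0 := pow_eq_zero_iff (by norm_num) |>.mp h2
    have h5 : 5*a^4 = b^12 := by
      rcases mul_eq_zero.mp hP with h | h
      · exact absurd h hb
      · linarith
    have h64 : b^12 * (80*b^3 - 64*a) = 0 := by linear_combination 5*hQ - a*h5
    have hba : a = 5*b^3/4 := by
      rcases mul_eq_zero.mp h64 with h | h
      · exact absurd (pow_eq_zero_iff (by norm_num) |>.mp h) hb
      · linarith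
    subst hba
    have hb12 : b^12 ≠ 0 := pow_ne_zero _ hb
    have h3 : (3125/256 : ℝ) * b^12 = b^12 := by linear_combination h5
    have h4 : (2869/256 : ℝ) * b^12 = 0 := by linarith
    exact hb12 (by nlinarith [h4])

theorem Kcompact : IsCompact {q : Fin 2 → ℝ | q 0 ^ 2 + q 1 ^ 6 = 1} := by
  apply Metric.isCompact_of_isClosed_isBounded
  · exact isClosed_eq (by fun_prop) continuous_const
  · apply (Metric.isBounded_closedBall (x := (0 : Fin 2 → ℝ)) (r := 1)).subset
    intro q hq
    simp only [Set.mem_setOf_eq] at hq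
    simp only [Metric.mem_closedBall, dist_zero_right]
    rw [pi_norm_le_iff_of_nonneg (by norm_num)]
    intro i
    fin_cases i <;> simp [Real.norm_eq_abs, abs_le] <;> constructor <;>
      nlinarith [sq_nonneg (q 0), sq_nonneg (q 1), sq_nonneg (q 1 - 1), sq_nonneg (q 1 + 1),
        sq_nonneg (q 1 ^ 2 - 1), sq_nonneg (q 1 ^ 2 + 1), sq_nonneg (q 1 ^ 3), sq_nonneg (q 1 ^ 2)]

noncomputable def hfun (q : Fin 2 → ℝ) : ℝ :=
  (q 1 * (5 * q 0 ^ 4 - q 1 ^ 12))^2 + (q 0 ^ 5 - 13 * q 0 * q 1 ^ 12 + 16 * q 1 ^ 15)^2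

theorem exists_min : ∃ m > (0:ℝ), ∀ a b : ℝ, a^2 + b^6 = 1 →
    m ≤ (b*(5*a^4 - b^12))^2 + (a^5 - 13*a*b^12 + 16*b^15)^2 := by
  have hne : ({q : Fin 2 → ℝ | q 0 ^ 2 + q 1 ^ 6 = 1}).Nonempty := by
    refine ⟨![1, 0], ?_⟩
    simp
  have hcont : Continuous hfun := by unfold hfun; fun_prop
  obtain ⟨q₀, hq₀, hmin'⟩ := Kcompact.exists_isMinOn hne hcont.continuousOn
  have hmin := isMinOn_iff.mp hmin'
  refine ⟨hfun q₀, ?_, ?_⟩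
  · have := sphere_pos (q₀ 0) (q₀ 1) hq₀
    unfold hfun
    linarith [this]
  · intro a b hab
    have hmem : (![a, b] : Fin 2 → ℝ) ∈ {q : Fin 2 → ℝ | q 0 ^ 2 + q 1 ^ 6 = 1} := by
      simpa using hab
    have := hmin ![a, b] hmem
    unfold hfun at this
    simpa [hfun] using this

/-- Pure-real inequality 1. -/
theorem ineq1 (t A B m : ℝ) (ht : 0 ≤ t) (ht1 : t ≤ 1) (hm : m ≤ A ^ 2 + B ^ 2) :
    t ^ 30 * m ≤ t ^ 26 * A ^ 2 + t ^ 30 * B ^ 2 := by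
  have h2630 : t ^ 30 ≤ t ^ 26 := pow_le_pow_of_le_one ht ht1 (by norm_num)
  have e1 : t ^ 30 * m ≤ t ^ 30 * (A ^ 2 + B ^ 2) :=
    mul_le_mul_of_nonneg_left hm (by positivity)
  have e2 : t ^ 30 * A ^ 2 ≤ t ^ 26 * A ^ 2 :=
    mul_le_mul_of_nonneg_right h2630 (sq_nonneg A)
  nlinarith [e1, e2]

/-- Pure-real inequality 2. -/
theorem ineq2 (t a b : ℝ) (ht : 0 ≤ t) (ht1 : t ≤ 1) (hab : a ^ 2 + b ^ 6 = 1) :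
    (t ^ 3 * a) ^ 2 + (t * b) ^ 2 ≤ (2 * t) ^ 2 := by
  have hb2 : b ^ 2 ≤ 1 := by
    nlinarith [sq_nonneg a, sq_nonneg (b ^ 2 - 1), sq_nonneg (b ^ 2 + 1), sq_nonneg b,
      sq_nonneg (b ^ 2), sq_nonneg (b ^ 3)]
  have ha2 : a ^ 2 ≤ 1 := by nlinarith [sq_nonneg (b ^ 3)]
  have ht62 : t ^ 6 ≤ t ^ 2 := pow_le_pow_of_le_one ht ht1 (by norm_num)
  have e1 : t ^ 6 * a ^ 2 ≤ t ^ 2 * 1 := by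
    calc t ^ 6 * a ^ 2 ≤ t ^ 2 * a ^ 2 := mul_le_mul_of_nonneg_right ht62 (sq_nonneg a)
      _ ≤ t ^ 2 * 1 := mul_le_mul_of_nonneg_left ha2 (sq_nonneg t)
  have e2 : t ^ 2 * b ^ 2 ≤ t ^ 2 * 1 := mul_le_mul_of_nonneg_left hb2 (sq_nonneg t)
  nlinarith [e1, e2, sq_nonneg t]

theorem loj15 :
    LojIneq (X 1 * ((X 0) ^ 5 - X 0 * (X 1) ^ 12 + (X 1) ^ 15) : MvPolynomial (Fin 2) ℝ) 15 := by
  obtain ⟨m, hm, hmin⟩ := exists_min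
  refine ⟨Real.sqrt m / 2 ^ 15, by positivity, {p : Fin 2 → ℝ | p 0 ^ 2 + p 1 ^ 6 < 1}, ?_, ?_⟩
  · exact (isOpen_lt (by fun_prop) continuous_const).mem_nhds (by norm_num)
  intro p hp
  simp only [Set.mem_setOf_eq] at hp
  rcases eq_or_ne p 0 with rfl | hp0
  · have h0 : eNorm (0 : Fin 2 → ℝ) = 0 := by rw [eNormEq]; norm_num
    rw [h0, Real.zero_rpow (by norm_num), mul_zero]
    rw [gradEq]
    positivity
  · have hs : 0 < p 0 ^ 2 + p 1 ^ 6 := by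
      have h6 : (0:ℝ) ≤ p 1 ^ 6 := by positivity
      have h2 : (0:ℝ) ≤ p 0 ^ 2 := by positivity
      rcases eq_or_ne (p 0) 0 with h0 | h0
      · have h1 : p 1 ≠ 0 := by
          intro h1
          apply hp0
          funext i
          fin_cases i
          · exact h0
          · exact h1
        have hsq : 0 < p 1 ^ 2 := by rcases h1.lt_or_gt with h | h <;> nlinarith
        have : 0 < p 1 ^ 6 := by nlinarith [pow_pos hsq 3]
        linarith
      · have : 0 < p 0 ^ 2 := by rcases h0.lt_or_gt with h | h <;> nlinarith
        linarith
    set s := p 0 ^ 2 + p 1 ^ 6 with hsdef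
    set t : ℝ := s ^ ((6:ℝ)⁻¹) with htdef
    have ht : 0 < t := Real.rpow_pos_of_pos hs _
    have ht6 : t ^ (6:ℕ) = s := by
      rw [htdef, ← Real.rpow_natCast (s ^ ((6:ℝ)⁻¹)) 6, ← Real.rpow_mul hs.le]
      norm_num
    have ht1 : t ≤ 1 := by
      by_contra h
      push_neg at h
      have := one_lt_pow₀ h (n := 6) (by norm_num)
      rw [ht6] at this
      linarith
    set a : ℝ := p 0 / t ^ 3 with hadef
    set b : ℝ := p 1 / t with hbdef
    have htne : t ≠ 0 := ht.ne'
    have hp0eq : p 0 = t ^ 3 * a := by rw [hadef]; field_simp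
    have hp1eq : p 1 = t * b := by rw [hbdef]; field_simp
    have hab : a ^ 2 + b ^ 6 = 1 := by
      rw [hadef, hbdef, div_pow, div_pow]
      rw [show (t^3)^2 = t^6 by ring]
      rw [← add_div, ht6, div_self (by positivity)]
    have hmab := hmin a b hab
    have hlow : t ^ 30 * m ≤ t ^ 26 * (b * (5 * a ^ 4 - b ^ 12)) ^ 2
        + t ^ 30 * (a ^ 5 - 13 * a * b ^ 12 + 16 * b ^ 15) ^ 2 :=
      ineq1 t _ _ m ht.le ht1 hmab
    have hinner : (p 1 * (5 * p 0 ^ 4 - p 1 ^ 12)) ^ 2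
        + (p 0 ^ 5 - 13 * p 0 * p 1 ^ 12 + 16 * p 1 ^ 15) ^ 2
        = t ^ 26 * (b * (5 * a ^ 4 - b ^ 12)) ^ 2
          + t ^ 30 * (a ^ 5 - 13 * a * b ^ 12 + 16 * b ^ 15) ^ 2 := by
      rw [hp0eq, hp1eq]; ring
    have hgrad : t ^ 15 * Real.sqrt m ≤ gradNorm
        (X 1 * ((X 0) ^ 5 - X 0 * (X 1) ^ 12 + (X 1) ^ 15) : MvPolynomial (Fin 2) ℝ) p := by
      rw [gradEq, hinner]
      calc t ^ 15 * Real.sqrt m = Real.sqrt (t ^ 30 * m) := by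
            rw [Real.sqrt_mul (by positivity), show t ^ 30 = (t ^ 15) ^ 2 by ring,
              Real.sqrt_sq (by positivity)]
        _ ≤ _ := Real.sqrt_le_sqrt hlow
    have hEn : eNorm p ≤ 2 * t := by
      rw [eNormEq]
      have hle : p 0 ^ 2 + p 1 ^ 2 ≤ (2 * t) ^ 2 := by
        rw [hp0eq, hp1eq]
        exact ineq2 t a b ht.le ht1 hab
      calc Real.sqrt (p 0 ^ 2 + p 1 ^ 2) ≤ Real.sqrt ((2 * t) ^ 2) := Real.sqrt_le_sqrt hle
        _ = 2 * t := Real.sqrt_sq (by positivity)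
    have hEn15 : eNorm p ^ (15:ℕ) ≤ (2 * t) ^ (15:ℕ) :=
      pow_le_pow_left₀ (by rw [eNormEq]; positivity) hEn 15
    rw [rpow15]
    calc Real.sqrt m / 2 ^ 15 * eNorm p ^ (15:ℕ)
        ≤ Real.sqrt m / 2 ^ 15 * (2 * t) ^ (15:ℕ) :=
          mul_le_mul_of_nonneg_left hEn15 (by positivity)
      _ = t ^ 15 * Real.sqrt m := by ring
      _ ≤ _ := hgrad

theorem lower_bound (lam : ℝ) (hlam : 0 < lam)
    (h : LojIneq (X 1 * ((X 0) ^ 5 - X 0 * (X 1) ^ 12 + (X 1) ^ 15) : MvPolynomial (Fin 2) ℝ) lam) :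
    15 ≤ lam := by
  by_contra hcon
  push_neg at hcon
  obtain ⟨C, hC, U, hU, hIneq⟩ := h
  obtain ⟨ε, hε, hball⟩ := Metric.mem_nhds_iff.mp hU
  set c : ℝ := (1/5 : ℝ) ^ ((4:ℝ)⁻¹) with hcdef
  have hc : 0 < c := Real.rpow_pos_of_pos (by norm_num) _
  have hc4 : c ^ (4:ℕ) = 1/5 := by
    rw [hcdef, ← Real.rpow_natCast ((1/5:ℝ) ^ ((4:ℝ)⁻¹)) 4, ← Real.rpow_mul (by norm_num)]
    norm_num
  have hc1 : c ≤ 1 := by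
    rw [hcdef]
    exact Real.rpow_le_one (by norm_num) (by norm_num) (by norm_num)
  set K : ℝ := c ^ 5 - 13 * c + 16 with hKdef
  have hK : 0 < K := by
    have h5 : (0:ℝ) ≤ c ^ 5 := by positivity
    rw [hKdef]
    nlinarith
  have htend : Filter.Tendsto (fun t : ℝ => K * t ^ (15 - lam)) (nhds 0) (nhds 0) := by
    have hcont : ContinuousAt (fun t : ℝ => t ^ (15 - lam)) 0 :=
      Real.continuousAt_rpow_const 0 _ (Or.inr (by linarith))
    have h0 : (0:ℝ) ^ (15 - lam) = 0 := Real.zero_rpow (ne_of_gt (by linarith : (0:ℝ) < 15 - lam))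
    have := (hcont.tendsto).const_mul K
    rw [h0, mul_zero] at this
    exact this
  have hev : ∀ᶠ t : ℝ in nhds 0, K * t ^ (15 - lam) < C :=
    htend.eventually (gt_mem_nhds hC)
  obtain ⟨δ, hδ, hδ'⟩ := Metric.eventually_nhds_iff.mp hev
  have hminpos : 0 < min ε (min 1 δ) := lt_min hε (lt_min one_pos hδ)
  set t : ℝ := min ε (min 1 δ) / 2 with htdef
  have ht : 0 < t := by positivity
  have htε : t < ε := by
    have := min_le_left ε (min 1 δ); rw [htdef]; linarith
  have ht1 : t ≤ 1 := by
    have h1 := min_le_right ε (min 1 δ)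
    have h2 := min_le_left (1:ℝ) δ
    rw [htdef]; linarith
  have htδ : t < δ := by
    have h1 := min_le_right ε (min 1 δ)
    have h2 := min_le_right (1:ℝ) δ
    rw [htdef]; linarith
  set p : Fin 2 → ℝ := ![c * t ^ 3, t] with hpdef
  have hp0 : p 0 = c * t ^ 3 := by rw [hpdef]; simp
  have hp1 : p 1 = t := by rw [hpdef]; simp
  have ht3 : t ^ 3 ≤ t := by nlinarith [sq_nonneg (t - 1), sq_nonneg t, sq_nonneg (t + 1)]
  have hct : c * t ^ 3 ≤ t := by
    have h1 : c * t ^ 3 ≤ 1 * t ^ 3 := mul_le_mul_of_nonneg_right hc1 (by positivity)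
    linarith
  have hmem : p ∈ U := by
    apply hball
    rw [Metric.mem_ball, dist_zero_right]
    have hnorm : ‖p‖ ≤ t := by
      rw [pi_norm_le_iff_of_nonneg ht.le, Fin.forall_fin_two]
      constructor
      · rw [Real.norm_eq_abs, hp0, abs_of_nonneg (by positivity)]
        exact hct
      · rw [Real.norm_eq_abs, hp1, abs_of_nonneg ht.le]
    exact lt_of_le_of_lt hnorm htε
  have heval := hIneq p hmem
  -- gradient value
  have hzero1 : p 1 * (5 * p 0 ^ 4 - p 1 ^ 12) = 0 := by
    rw [hp0, hp1]
    have h1 : (5:ℝ) * c ^ 4 = 1 := by rw [hc4]; norm_num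
    linear_combination t ^ 13 * h1
  have hval2 : p 0 ^ 5 - 13 * p 0 * p 1 ^ 12 + 16 * p 1 ^ 15 = K * t ^ 15 := by
    rw [hp0, hp1, hKdef]; ring
  have hgradval : gradNorm
      (X 1 * ((X 0) ^ 5 - X 0 * (X 1) ^ 12 + (X 1) ^ 15) : MvPolynomial (Fin 2) ℝ) p
      = K * t ^ 15 := by
    rw [gradEq, hzero1, hval2]
    rw [show (0:ℝ) ^ 2 + (K * t ^ 15) ^ 2 = (K * t ^ 15) ^ 2 by ring]
    exact Real.sqrt_sq (by positivity)
  have hEn : t ≤ eNorm p := by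
    rw [eNormEq, hp0, hp1]
    calc t = Real.sqrt (t ^ 2) := (Real.sqrt_sq ht.le).symm
      _ ≤ _ := Real.sqrt_le_sqrt (by nlinarith [sq_nonneg (c * t ^ 3)])
  have hrp : t ^ (lam : ℝ) ≤ eNorm p ^ (lam : ℝ) :=
    Real.rpow_le_rpow ht.le hEn hlam.le
  have hchain : C * t ^ (lam : ℝ) ≤ K * t ^ 15 := by
    calc C * t ^ (lam : ℝ) ≤ C * eNorm p ^ (lam : ℝ) :=
          mul_le_mul_of_nonneg_left hrp hC.le
      _ ≤ _ := by rw [← hgradval]; exact heval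
  have hsplit : t ^ (15 : ℕ) = t ^ (lam : ℝ) * t ^ (15 - lam) := by
    rw [← Real.rpow_add ht lam (15 - lam), show lam + (15 - lam) = 15 by ring]
    rw [rpow15]
  have hpos : (0:ℝ) < t ^ (lam : ℝ) := Real.rpow_pos_of_pos ht _
  have hfin : C ≤ K * t ^ (15 - lam) := by
    have : C * t ^ (lam : ℝ) ≤ (K * t ^ (15 - lam)) * t ^ (lam : ℝ) := by
      calc C * t ^ (lam : ℝ) ≤ K * t ^ 15 := hchain
        _ = (K * t ^ (15 - lam)) * t ^ (lam : ℝ) := by rw [hsplit]; ring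
    exact le_of_mul_le_mul_right this hpos
  have hlt : K * t ^ (15 - lam) < C := by
    apply hδ'
    rw [Real.dist_eq, sub_zero, abs_of_nonneg ht.le]
    exact htδ
  linarith

end Stmt16Aux

theorem stmt16 :
    lojExp (X 1 * ((X 0) ^ 5 - X 0 * (X 1) ^ 12 + (X 1) ^ 15) : MvPolynomial (Fin 2) ℝ) = 15 := by
  unfold lojExp
  apply le_antisymm
  · exact csInf_le ⟨15, fun x hx => Stmt16Aux.lower_bound x hx.1 hx.2⟩
      ⟨by norm_num, Stmt16Aux.loj15⟩
  · exact le_csInf ⟨15, by norm_num, Stmt16Aux.loj15⟩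
      fun b hb => Stmt16Aux.lower_bound b hb.1 hb.2
end

section
/- Let f : ℝ² → ℝ be a weighted homogeneous polynomial of type (d; w₁, w₂) with w₂ ≤ w₁. Then there exist C > 0 and a neighborhood U of 0 such that ρ(x)^{w₂} · ‖∇f(x)‖ ≥ C · ‖grad_w f(x)‖_w for all x ∈ U, where ρ(x) = (|x₁|^{2/w₁} + |x₂|^{2/w₂})^{1/2} and ‖grad_w f(x)‖_w = (ρ(x)^{2w₁}|∂f/∂x₁(x)|² + ρ(x)^{2w₂}|∂f/∂x₂(x)|²)^{1/2}. -/
open MvPolynomial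

theorem stmt17 (d w₁ w₂ : ℕ) (hd : 0 < d) (hw₂ : 0 < w₂) (hw : w₂ ≤ w₁)
    (f : MvPolynomial (Fin 2) ℝ)
    (hhom : IsWeightedHomog f ![w₁, w₂] d) :
    ∃ C > (0 : ℝ), ∃ U ∈ nhds (0 : Fin 2 → ℝ), ∀ x ∈ U,
      C * wGradNorm ![w₁, w₂] f x ≤ rho ![w₁, w₂] x ^ w₂ * gradNorm f x := by

  have hw₁ : 0 < w₁ := lt_of_lt_of_le hw₂ hw
  have hwpos : ∀ i : Fin 2, 0 < ((![w₁, w₂] i : ℕ) : ℝ) := by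
    intro i; fin_cases i <;> simp <;> [exact hw₁; exact hw₂]
  have hcont : Continuous (rho ![w₁, w₂] : (Fin 2 → ℝ) → ℝ) := by
    unfold rho
    apply Real.continuous_sqrt.comp
    apply continuous_finset_sum
    intro i _
    apply continuous_iff_continuousAt.mpr
    intro x
    exact (Real.continuousAt_rpow_const _ _
      (Or.inr (div_pos two_pos (hwpos i)).le)).comp
      ((continuous_abs.comp (continuous_apply i)).continuousAt)
  have hrho0 : rho ![w₁, w₂] (0 : Fin 2 → ℝ) = 0 := by
    unfold rho
    have : ∀ i : Fin 2, |(0 : Fin 2 → ℝ) i| ^ ((2 : ℝ) / ((![w₁, w₂] i : ℕ) : ℝ)) = 0 := by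
      intro i
      simp only [Pi.zero_apply, abs_zero]
      exact Real.zero_rpow (div_pos two_pos (hwpos i)).ne'
    rw [Finset.sum_congr rfl (fun i _ => this i)]
    simp
  refine ⟨1, one_pos, {x | rho ![w₁, w₂] x < 1}, ?_, ?_⟩
  · exact (isOpen_lt hcont continuous_const).mem_nhds (by simp [hrho0])
  · intro x hx
    have hr0 : 0 ≤ rho ![w₁, w₂] x := Real.sqrt_nonneg _
    have hr1 : rho ![w₁, w₂] x ≤ 1 := le_of_lt hx
    rw [one_mul]
    unfold wGradNorm gradNorm
    have key : ∑ i, rho ![w₁, w₂] x ^ (2 * (![w₁, w₂] i)) * (eval x (pderiv i f)) ^ 2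
        ≤ rho ![w₁, w₂] x ^ (2 * w₂) * ∑ i, (eval x (pderiv i f)) ^ 2 := by
      rw [Finset.mul_sum]
      apply Finset.sum_le_sum
      intro i _
      apply mul_le_mul_of_nonneg_right _ (sq_nonneg _)
      apply pow_le_pow_of_le_one hr0 hr1
      have : w₂ ≤ ![w₁, w₂] i := by fin_cases i <;> simp [hw]
      omega
    calc Real.sqrt (∑ i, rho ![w₁, w₂] x ^ (2 * (![w₁, w₂] i)) * (eval x (pderiv i f)) ^ 2)
        ≤ Real.sqrt (rho ![w₁, w₂] x ^ (2 * w₂) * ∑ i, (eval x (pderiv i f)) ^ 2) :=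
          Real.sqrt_le_sqrt key
      _ = rho ![w₁, w₂] x ^ w₂ * Real.sqrt (∑ i, (eval x (pderiv i f)) ^ 2) := by
          rw [mul_comm 2 w₂, pow_mul, Real.sqrt_mul (sq_nonneg _),
            Real.sqrt_sq (pow_nonneg hr0 _)]
end
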